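/- Let α > 0, μ_α = √(4α² - 4α + 9), and A_α = (2α + 3 - μ_α)(5 - 2α + μ_α)(6α - 3 + μ_α)² / (4096 α³). If 0 ≤ V² ≤ A_α, then there exists x ∈ [0, 1) such that x(1 - α|x|)(1 - x)² = V². -/

import Mathlib

theorem exists_root_below_pullin (α : ℝ) (hα : 0 < α) (V : ℝ)
    (μ : ℝ) (hμ : μ = Real.sqrt (4*α^2 - 4*α + 9))
    (A : ℝ) (hA : A = (2*α + 3 - μ)*(5 - 2*α + μ)*(6*α - 3 + μ)^2 / (4096*α^3))
    (hV₀ : 0 ≤ V^2) (hV : V^2 ≤ A) :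
    ∃ x ∈ Set.Ico (0:ℝ) 1, x*(1 - α*|x|)*(1 - x)^2 = V^2 := by
  have hs : (0:ℝ) ≤ 4*α^2 - 4*α + 9 := by nlinarith [sq_nonneg (2*α - 1)]
  have hμ0 : 0 ≤ μ := hμ ▸ Real.sqrt_nonneg _
  have hμ2 : μ^2 = 4*α^2 - 4*α + 9 := by rw [hμ, Real.sq_sqrt hs]
  have hμpos : 0 < μ := by nlinarith [sq_nonneg (2*α-1)]
  have hlt : μ < 3 + 2*α := by nlinarith [mul_pos hα hα]
  have hgt : 3 - 6*α < μ := by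
    rcases le_or_gt α 1 with h1 | h1
    · nlinarith
    · nlinarith
  set x₁ : ℝ := (3 + 2*α - μ)/(8*α) with hx₁
  have h8α : (0:ℝ) < 8*α := by linarith
  have hx₁0 : 0 ≤ x₁ := by
    apply div_nonneg _ (le_of_lt h8α); linarith
  have hx₁1 : x₁ < 1 := by
    rw [hx₁, div_lt_one h8α]; linarith
  have e1 : 2*α + 3 - μ = 8*α*x₁ := by rw [hx₁]; field_simp; ring
  have e2 : 5 - 2*α + μ = 8*(1 - α*x₁) := by rw [hx₁]; field_simp; ring
  have e3 : 6*α - 3 + μ = 8*α*(1 - x₁) := by rw [hx₁]; field_simp; ring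
  have hfx₁ : x₁*(1 - α*|x₁|)*(1 - x₁)^2 = A := by
    rw [abs_of_nonneg hx₁0, hA, e1, e2, e3]
    field_simp
    ring
  set f : ℝ → ℝ := fun x => x*(1 - α*|x|)*(1 - x)^2 with hf
  have hcont : ContinuousOn f (Set.Icc 0 x₁) := by
    apply Continuous.continuousOn
    fun_prop
  have hf0 : f 0 = 0 := by simp [hf]
  have hsub := intermediate_value_Icc hx₁0 hcont
  have hmem : V^2 ∈ Set.Icc (f 0) (f x₁) := by
    rw [hf0]; constructor
    · exact hV₀
    · show V^2 ≤ x₁*(1 - α*|x₁|)*(1 - x₁)^2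
      rw [hfx₁]; exact hV
  obtain ⟨x, hx, hfx⟩ := hsub hmem
  exact ⟨x, ⟨hx.1, lt_of_le_of_lt hx.2 hx₁1⟩, hfx⟩
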